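/- Let τ ∈ ℂ with positive imaginary part, let L = ℤ + ℤτ be the lattice spanned by 1 and τ, and let R_τ = {α ∈ ℂ : αL ⊆ L} be its multiplier ring. Then R_τ strictly contains ℤ (i.e., there exists α ∈ R_τ with α ∉ ℤ) if and only if τ is algebraic over ℚ of degree 2. -/
import Mathlib


/-- For τ in the upper half plane and L = ℤ + ℤτ, the multiplier ring
R_τ = {α : αL ⊆ L} strictly contains ℤ iff τ is algebraic of degree 2 over ℚ. -/
theorem multiplier_ring_strictly_contains_int_iff_quadratic
    (τ : ℂ) (hτ : 0 < τ.im)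
    (L : Submodule ℤ ℂ) (hL : L = Submodule.span ℤ ({1, τ} : Set ℂ))
    (R : Set ℂ) (hR : R = {α : ℂ | ∀ z ∈ L, α * z ∈ L}) :
    (∃ α ∈ R, α ∉ Set.range ((↑) : ℤ → ℂ)) ↔
      (IsAlgebraic ℚ τ ∧ (minpoly ℚ τ).degree = 2) := by
  subst hL hR
  constructor
  · rintro ⟨α, hα, hnot⟩
    simp only [Set.mem_setOf_eq] at hα
    have h1 : α * 1 ∈ Submodule.span ℤ ({1, τ} : Set ℂ) :=
      hα _ (Submodule.subset_span (by simp))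
    have h2 : α * τ ∈ Submodule.span ℤ ({1, τ} : Set ℂ) :=
      hα _ (Submodule.subset_span (by simp))
    rw [Submodule.mem_span_pair] at h1 h2
    obtain ⟨a, b, hab⟩ := h1
    obtain ⟨c, d, hcd⟩ := h2
    simp only [zsmul_eq_mul, mul_one] at hab hcd
    have hb : b ≠ 0 := by
      rintro rfl
      exact hnot ⟨a, by simpa using hab⟩
    rw [← hab] at hcd
    set p : Polynomial ℚ :=
      Polynomial.C (b : ℚ) * Polynomial.X ^ 2 +
        Polynomial.C ((a : ℚ) - d) * Polynomial.X + Polynomial.C (-(c : ℚ)) with hp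
    have hpd : p.degree = 2 := Polynomial.degree_quadratic (by exact_mod_cast hb)
    have hp0 : p ≠ 0 := fun h => by simp [h] at hpd
    have hroot : Polynomial.aeval τ p = 0 := by
      simp only [hp, map_add, map_mul, Polynomial.aeval_C, Polynomial.aeval_X, map_pow,
        map_neg, eq_ratCast]
      push_cast
      linear_combination -hcd
    have halg : IsAlgebraic ℚ τ := ⟨p, hp0, hroot⟩
    refine ⟨halg, ?_⟩
    have hint : IsIntegral ℚ τ := halg.isIntegral
    have hmz : minpoly ℚ τ ≠ 0 := minpoly.ne_zero hint
    have hle : (minpoly ℚ τ).natDegree ≤ 2 := by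
      have := minpoly.degree_le_of_ne_zero ℚ τ hp0 hroot
      rw [hpd] at this
      exact Polynomial.natDegree_le_iff_degree_le.mpr this
    have hne1 : (minpoly ℚ τ).natDegree ≠ 1 := by
      intro h
      rw [minpoly.natDegree_eq_one_iff] at h
      obtain ⟨q, hq⟩ := h
      have : τ.im = 0 := by rw [← hq]; simp [Complex.ratCast_im]
      linarith
    have hpos : 0 < (minpoly ℚ τ).natDegree := minpoly.natDegree_pos hint
    have : (minpoly ℚ τ).natDegree = 2 := by omega
    rw [Polynomial.degree_eq_natDegree hmz, this]
    rfl
  · rintro ⟨halg, hdeg⟩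
    have hint : IsIntegral ℚ τ := halg.isIntegral
    set p := minpoly ℚ τ with hp
    have hmonic : p.Monic := minpoly.monic hint
    have hnd : p.natDegree = 2 := Polynomial.natDegree_eq_of_degree_eq_some hdeg
    set q1 : ℚ := p.coeff 1 with hq1d
    set q0 : ℚ := p.coeff 0 with hq0d
    have hc2 : p.coeff 2 = 1 := by
      have := hmonic.leadingCoeff
      rwa [Polynomial.leadingCoeff, hnd] at this
    have hroot : τ ^ 2 + (q1 : ℂ) * τ + (q0 : ℂ) = 0 := by
      have h0 : Polynomial.aeval τ p = 0 := minpoly.aeval ℚ τ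
      rw [Polynomial.aeval_eq_sum_range' (n := 3) (by omega)] at h0
      simp only [Finset.sum_range_succ, Finset.sum_range_zero, hc2, Rat.smul_def,
        pow_zero, pow_one, zero_add, one_smul, Rat.cast_one] at h0
      rw [← hq1d, ← hq0d] at h0
      linear_combination h0
    set n : ℤ := (q1.den : ℤ) * q0.den with hn
    have hn0 : (0 : ℤ) < n := by positivity
    have hd1 : ((q1.den : ℚ)) ≠ 0 := by positivity
    have hd0 : ((q0.den : ℚ)) ≠ 0 := by positivity
    have hnum1 : (q1.num : ℚ) = q1 * q1.den := (div_eq_iff hd1).mp (Rat.num_div_den q1)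
    have hnum0 : (q0.num : ℚ) = q0 * q0.den := (div_eq_iff hd0).mp (Rat.num_div_den q0)
    set a : ℤ := q1.num * q0.den with ha
    set c : ℤ := q0.num * q1.den with hc
    have haQ : (a : ℚ) = n * q1 := by push_cast [ha, hn, hnum1]; ring
    have hcQ : (c : ℚ) = n * q0 := by push_cast [hc, hn, hnum0]; ring
    have key : (n : ℂ) * τ ^ 2 + (a : ℂ) * τ + (c : ℂ) = 0 := by
      have ha' : ((a : ℤ) : ℂ) = (n : ℂ) * (q1 : ℂ) := by exact_mod_cast congrArg (Rat.cast (K := ℂ)) haQ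
      have hc' : ((c : ℤ) : ℂ) = (n : ℂ) * (q0 : ℂ) := by exact_mod_cast congrArg (Rat.cast (K := ℂ)) hcQ
      rw [ha', hc']
      linear_combination (n : ℂ) * hroot
    refine ⟨(n : ℂ) * τ, ?_, ?_⟩
    · simp only [Set.mem_setOf_eq]
      intro z hz
      rw [Submodule.mem_span_pair] at hz
      obtain ⟨m, k, hmk⟩ := hz
      rw [Submodule.mem_span_pair]
      refine ⟨-k * c, m * n - k * a, ?_⟩
      simp only [zsmul_eq_mul, mul_one] at hmk ⊢
      rw [← hmk]
      push_cast
      linear_combination -(k : ℂ) * key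
    · rintro ⟨m, hm⟩
      have him : ((n : ℂ) * τ).im = 0 := by rw [← hm]; simp
      simp only [Complex.mul_im, Complex.intCast_re, Complex.intCast_im, zero_mul,
        add_zero] at him
      have hn0' : (n : ℝ) ≠ 0 := by exact_mod_cast hn0.ne'
      rcases mul_eq_zero.mp him with h | h
      · exact hn0' h
      · linarith
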